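/- Most permissive fully asynchronous semantics simulates any multivalued refinement: Let f be a Boolean network of dimension n, m ≥ 1, 𝕄 = {0, 1/m, …, (m−1)/m, 1}, and let F be a multivalued network of dimension n over 𝕄 that refines f. Then for all x, y ∈ 𝕄^n, x →_F y implies abstr(x) ⇝*_f abstr(y), where ⇝*_f is the reflexive-transitive closure of the most permissive fully asynchronous transition relation of f. -/
import Mathlib


/-- Multivalued configurations over 𝕄 = {0, 1/m, …, 1}: component `i` has value `x i / m`. -/
abbrev MConf (n m : ℕ) := Fin n → Fin (m + 1)

/-- `abstr : 𝕄^n → {0,½,1}^n`; `some false` = 0, `some true` = 1, `none` = ½. -/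
def abstr {n m : ℕ} (x : MConf n m) : Fin n → Option Bool := fun i =>
  if (x i : ℕ) = 0 then some false else if (x i : ℕ) = m then some true else none

/-- `x'` is a Boolean approximation of the 3-valued configuration `x`. -/
def approx {n : ℕ} (x : Fin n → Option Bool) (x' : Fin n → Bool) : Prop :=
  ∀ (i : Fin n) (b : Bool), x i = some b → x' i = b

/-- Asynchronous transition relation of a multivalued network `F`
(`some true` = ↑, `some false` = ↓, `none` = −); values are scaled by `m`. -/
def mvStep {n m : ℕ} (F : Fin n → MConf n m → Option Bool) (x y : MConf n m) : Prop :=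
  ∃ i : Fin n, x i ≠ y i ∧ (∀ j : Fin n, j ≠ i → x j = y j) ∧
    ((F i x = some false ∧ (y i : ℕ) = (x i : ℕ) - 1) ∨
     (F i x = some true ∧ (y i : ℕ) = min m ((x i : ℕ) + 1)))

/-- `F` refines the Boolean network `f`. -/
def refines {n m : ℕ} (F : Fin n → MConf n m → Option Bool)
    (f : Fin n → (Fin n → Bool) → Bool) : Prop :=
  ∀ (x : MConf n m) (i : Fin n),
    (F i x = some true → ∃ x' : Fin n → Bool, approx (abstr x) x' ∧ f i x' = true) ∧
    (F i x = some false → ∃ x' : Fin n → Bool, approx (abstr x) x' ∧ f i x' = false)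

/-- Most permissive fully asynchronous transition relation of a Boolean network `f`
on 3-valued configurations (`none` = ½). -/
def mpStep {n : ℕ} (f : Fin n → (Fin n → Bool) → Bool)
    (x y : Fin n → Option Bool) : Prop :=
  ∃ (i : Fin n) (x' : Fin n → Bool), approx x x' ∧
    x i ≠ y i ∧ (∀ j : Fin n, j ≠ i → x j = y j) ∧
    (match x i with
     | none => y i = some (f i x')
     | some b => b ≠ f i x' ∧ y i = none)

/-- the most permissive fully asynchronous semantics of `f`
simulates every multivalued refinement `F` of `f`. -/
theorem mp_simulates_multivalued {n m : ℕ} (hm : 1 ≤ m)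
    (f : Fin n → (Fin n → Bool) → Bool)
    (F : Fin n → MConf n m → Option Bool) (hF : refines F f)
    (x y : MConf n m) (hxy : mvStep F x y) :
    Relation.ReflTransGen (mpStep f) (abstr x) (abstr y) := by
  obtain ⟨i, hne, hrest, hcase⟩ := hxy
  have hvne : (x i : ℕ) ≠ (y i : ℕ) := fun h => hne (Fin.ext h)
  have habs : ∀ j : Fin n, j ≠ i → abstr x j = abstr y j := by
    intro j hj; simp only [abstr, hrest j hj]
  have hxle : (x i : ℕ) ≤ m := Nat.lt_succ_iff.mp (x i).isLt
  rcases hcase with ⟨hFi, hy⟩ | ⟨hFi, hy⟩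
  · -- decrease
    obtain ⟨x', hx', hfx'⟩ := (hF x i).2 hFi
    have hx1 : 1 ≤ (x i : ℕ) := by omega
    by_cases hxm : (x i : ℕ) = m
    · have hax : abstr x i = some true := by
        simp only [abstr]; rw [if_neg (by omega), if_pos hxm]
      by_cases hy0 : (y i : ℕ) = 0
      · -- m = 1 : two steps through ½
        have hay : abstr y i = some false := by
          simp only [abstr]; rw [if_pos hy0]
        set z : Fin n → Option Bool := fun j => if j = i then none else abstr x j with hz
        refine Relation.ReflTransGen.head (b := z) ?_ (Relation.ReflTransGen.single ?_)
        · refine ⟨i, x', hx', ?_, ?_, ?_⟩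
          · rw [hax]; simp [hz]
          · intro j hj; simp [hz, hj]
          · simp only [hax, hfx']
            exact ⟨by simp, by simp [hz]⟩
        · refine ⟨i, x', ?_, ?_, ?_, ?_⟩
          · intro j b hjb
            by_cases hji : j = i
            · subst hji; simp [hz] at hjb
            · exact hx' j b (by simpa [hz, hji] using hjb)
          · simp [hz, hay]
          · intro j hj; simp [hz, hj, habs j hj]
          · simp only [hz]
            simp [hay, hfx']
      · -- one step : some true → none
        have hay : abstr y i = none := by
          simp only [abstr]; rw [if_neg hy0, if_neg (by omega)]
        refine Relation.ReflTransGen.single ⟨i, x', hx', ?_, habs, ?_⟩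
        · rw [hax, hay]; simp
        · simp only [hax, hay, hfx']
          exact ⟨by simp, trivial⟩
    · have hax : abstr x i = none := by
        simp only [abstr]; rw [if_neg (by omega), if_neg hxm]
      by_cases hy0 : (y i : ℕ) = 0
      · -- one step : none → some false
        have hay : abstr y i = some false := by
          simp only [abstr]; rw [if_pos hy0]
        refine Relation.ReflTransGen.single ⟨i, x', hx', ?_, habs, ?_⟩
        · rw [hax, hay]; simp
        · simp only [hax, hay, hfx']
      · -- no abstraction change
        have hay : abstr y i = none := by
          simp only [abstr]; rw [if_neg hy0, if_neg (by omega)]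
        have : abstr x = abstr y := by
          funext j
          by_cases hj : j = i
          · subst hj; rw [hax, hay]
          · exact habs j hj
        rw [this]
  · -- increase
    obtain ⟨x', hx', hfx'⟩ := (hF x i).1 hFi
    have hxm : (x i : ℕ) < m := by omega
    have hy' : (y i : ℕ) = (x i : ℕ) + 1 := by omega
    by_cases hx0 : (x i : ℕ) = 0
    · have hax : abstr x i = some false := by
        simp only [abstr]; rw [if_pos hx0]
      by_cases hym : (y i : ℕ) = m
      · -- m = 1 : two steps through ½
        have hay : abstr y i = some true := by
          simp only [abstr]; rw [if_neg (by omega), if_pos hym]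
        set z : Fin n → Option Bool := fun j => if j = i then none else abstr x j with hz
        refine Relation.ReflTransGen.head (b := z) ?_ (Relation.ReflTransGen.single ?_)
        · refine ⟨i, x', hx', ?_, ?_, ?_⟩
          · rw [hax]; simp [hz]
          · intro j hj; simp [hz, hj]
          · simp only [hax, hfx']
            exact ⟨by simp, by simp [hz]⟩
        · refine ⟨i, x', ?_, ?_, ?_, ?_⟩
          · intro j b hjb
            by_cases hji : j = i
            · subst hji; simp [hz] at hjb
            · exact hx' j b (by simpa [hz, hji] using hjb)
          · simp [hz, hay]
          · intro j hj; simp [hz, hj, habs j hj]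
          · simp only [hz]
            simp [hay, hfx']
      · -- one step : some false → none
        have hay : abstr y i = none := by
          simp only [abstr]; rw [if_neg (by omega), if_neg hym]
        refine Relation.ReflTransGen.single ⟨i, x', hx', ?_, habs, ?_⟩
        · rw [hax, hay]; simp
        · simp only [hax, hay, hfx']
          exact ⟨by simp, trivial⟩
    · have hax : abstr x i = none := by
        simp only [abstr]; rw [if_neg hx0, if_neg (by omega)]
      by_cases hym : (y i : ℕ) = m
      · -- one step : none → some true
        have hay : abstr y i = some true := by
          simp only [abstr]; rw [if_neg (by omega), if_pos hym]
        refine Relation.ReflTransGen.single ⟨i, x', hx', ?_, habs, ?_⟩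
        · rw [hax, hay]; simp
        · simp only [hax, hay, hfx']
      · have hay : abstr y i = none := by
          simp only [abstr]; rw [if_neg (by omega), if_neg hym]
        have : abstr x = abstr y := by
          funext j
          by_cases hj : j = i
          · subst hj; rw [hax, hay]
          · exact habs j hj
        rw [this]
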